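/- For every integer j: T_R(12j) = 9j, T_R^2(48j + 18) = 9j + 3, T_R^3(192j + 138) = 9j + 6, T_R^3(192j + 42) = 3j, T_R^3(96j + 90) = 9j + 8, T_R^2(24j + 6) = 9j + 2, and T_R(6j + 3) = 9j + 5. (This describes how the accelerated refined map carries the seven-piece partition of the congruence class [0]_3 onto congruence classes mod 9 and mod 3.) -/
import Mathlib


/-- The refined map `T_R`. -/
def TR (n : ℤ) : ℤ :=
  if n % 4 = 0 then 3 * n / 4
  else if n % 4 = 2 then (n - 2) / 4
  else (3 * n + 1) / 2

lemma TR0 (m : ℤ) : TR (4 * m) = 3 * m := by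
  unfold TR; split_ifs <;> omega

lemma TR2 (m : ℤ) : TR (4 * m + 2) = m := by
  unfold TR; split_ifs <;> omega

lemma TRodd (m : ℤ) : TR (2 * m + 1) = 3 * m + 2 := by
  unfold TR; split_ifs <;> omega

theorem stmt_10 (j : ℤ) :
    TR (12 * j) = 9 * j ∧
    TR^[2] (48 * j + 18) = 9 * j + 3 ∧
    TR^[3] (192 * j + 138) = 9 * j + 6 ∧
    TR^[3] (192 * j + 42) = 3 * j ∧
    TR^[3] (96 * j + 90) = 9 * j + 8 ∧
    TR^[2] (24 * j + 6) = 9 * j + 2 ∧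
    TR (6 * j + 3) = 9 * j + 5 := by
  simp only [Function.iterate_succ, Function.iterate_zero, Function.comp_apply, id_eq]
  refine ⟨?_, ?_, ?_, ?_, ?_, ?_, ?_⟩
  · rw [show (12 * j : ℤ) = 4 * (3 * j) by ring, TR0]; ring
  · rw [show (48 * j + 18 : ℤ) = 4 * (12 * j + 4) + 2 by ring, TR2,
      show (12 * j + 4 : ℤ) = 4 * (3 * j + 1) by ring, TR0]; ring
  · rw [show (192 * j + 138 : ℤ) = 4 * (48 * j + 34) + 2 by ring, TR2,
      show (48 * j + 34 : ℤ) = 4 * (12 * j + 8) + 2 by ring, TR2,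
      show (12 * j + 8 : ℤ) = 4 * (3 * j + 2) by ring, TR0]; ring
  · rw [show (192 * j + 42 : ℤ) = 4 * (48 * j + 10) + 2 by ring, TR2,
      show (48 * j + 10 : ℤ) = 4 * (12 * j + 2) + 2 by ring, TR2,
      show (12 * j + 2 : ℤ) = 4 * (3 * j) + 2 by ring, TR2]
  · rw [show (96 * j + 90 : ℤ) = 4 * (24 * j + 22) + 2 by ring, TR2,
      show (24 * j + 22 : ℤ) = 4 * (6 * j + 5) + 2 by ring, TR2,
      show (6 * j + 5 : ℤ) = 2 * (3 * j + 2) + 1 by ring, TRodd]; ring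
  · rw [show (24 * j + 6 : ℤ) = 4 * (6 * j + 1) + 2 by ring, TR2,
      show (6 * j + 1 : ℤ) = 2 * (3 * j) + 1 by ring, TRodd]; ring
  · rw [show (6 * j + 3 : ℤ) = 2 * (3 * j + 1) + 1 by ring, TRodd]; ring
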